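/- arXiv:2305.05655 — 2 statements merged into one kernel-verified Lean document; each statement's English description precedes it below -/
import Mathlib

section
/- In ΣΠC with C monoidal, the composition product (∑_{i∈I} ∏_{a∈A_i} u_{i,a}) ◁ (∑_{j∈J} ∏_{b∈B_j} v_{j,b}) := ∑_{i∈I} ∏_{a∈A_i} ∑_{j∈J} ∏_{b∈B_j} (u_{i,a} · v_{j,b}) is isomorphic to ∑_{i∈I} ∑_{j̄: A_i → J} ∏_{a∈A_i} ∏_{b∈B_{j̄(a)}} (u_{i,a} · v_{j̄(a),b}). -/
open CategoryTheory Limits Opposite MonoidalCategory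

universe v u

/-- The free product completion of a category. -/
structure FreeProd (C : Type u) [Category.{v} C] where
  ι : Type v
  obj : ι → C

instance FreeProd.category (C : Type u) [Category.{v} C] : Category.{v} (FreeProd C) where
  Hom X Y := Σ f : Y.ι → X.ι, ∀ j, X.obj (f j) ⟶ Y.obj j
  id X := ⟨fun i => i, fun _ => 𝟙 _⟩
  comp {X Y Z} F G := ⟨fun k => F.1 (G.1 k), fun k => F.2 (G.1 k) ≫ G.2 k⟩
  id_comp F := by obtain ⟨f, g⟩ := F; dsimp; congr 1 <;> simp
  comp_id F := by obtain ⟨f, g⟩ := F; dsimp; congr 1 <;> simp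
  assoc F G H := by dsimp; congr 1 <;> simp

/-- The free coproduct completion of a category. -/
structure FreeCoprod (C : Type u) [Category.{v} C] where
  ι : Type v
  obj : ι → C

instance FreeCoprod.category (C : Type u) [Category.{v} C] : Category.{v} (FreeCoprod C) where
  Hom X Y := Σ f : X.ι → Y.ι, ∀ i, X.obj i ⟶ Y.obj (f i)
  id X := ⟨fun i => i, fun _ => 𝟙 _⟩
  comp {X Y Z} F G := ⟨fun i => G.1 (F.1 i), fun i => F.2 i ≫ G.2 (F.1 i)⟩
  id_comp F := by obtain ⟨f, g⟩ := F; dsimp; congr 1 <;> simp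
  comp_id F := by obtain ⟨f, g⟩ := F; dsimp; congr 1 <;> simp
  assoc F G H := by dsimp; congr 1 <;> simp

/-- The category of polynomials in `C`: the free coproduct completion of the free product
completion of `C`. -/
abbrev SigmaPi (C : Type u) [Category.{v} C] := FreeCoprod (FreeProd C)

/-- The polynomial `∑_{i∈I} ∏_{a∈A_i} c_{i,a}` as an object of `ΣΠC`. -/
def polyObj {C : Type u} [Category.{v} C] (I : Type v) (A : I → Type v)
    (c : ∀ i, A i → C) : SigmaPi C :=
  ⟨I, fun i => ⟨A i, c i⟩⟩

section
variable {C : Type u} [Category.{v} C] [MonoidalCategory C]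
  (I : Type v) (A : I → Type v) (u : ∀ i, A i → C)
  (J : Type v) (B : J → Type v) (v : ∀ j, B j → C)

/-- `∑_{j∈J} ∏_{b∈B_j} (u_{i,a} · v_{j,b})`, the inner factor of the composition product. -/
def compFactor (i : I) (a : A i) : SigmaPi C :=
  polyObj J B (fun j b => u i a ⊗ v j b)

/-- `∑_{j̄ : A_i → J} ∏_{a∈A_i} ∏_{b∈B_{j̄ a}} (u_{i,a} · v_{j̄ a,b})`, the `i`-th summand of
the distributed form of the composition product. -/
def compSummand (i : I) : SigmaPi C :=
  polyObj (A i → J) (fun jbar => Σ a : A i, B (jbar a))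
    (fun jbar p => u i p.1 ⊗ v (jbar p.1) p.2)

/-- The projection `compSummand i ⟶ compFactor i a`. -/
def compProj (i : I) (a : A i) : compSummand I A u J B v i ⟶ compFactor I A u J B v i a :=
  ⟨fun jbar => jbar a, fun jbar => ⟨fun b => ⟨a, b⟩, fun _ => 𝟙 _⟩⟩

/-- The distributed form of the whole composition product,
`∑_{i∈I} ∑_{j̄ : A_i → J} ∏_{a∈A_i} ∏_{b∈B_{j̄ a}} (u_{i,a} · v_{j̄ a,b})`. -/
def compTotal : SigmaPi C :=
  polyObj (Σ i : I, A i → J) (fun p => Σ a : A p.1, B (p.2 a))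
    (fun p q => u p.1 q.1 ⊗ v (p.2 q.1) q.2)

/-- The inclusion `compSummand i ⟶ compTotal`. -/
def compIncl (i : I) : compSummand I A u J B v i ⟶ compTotal I A u J B v :=
  ⟨fun jbar => ⟨i, jbar⟩, fun _ => 𝟙 _⟩

lemma FreeProd.hom_ext' {D : Type u} [Category.{v} D] {X Y : FreeProd D} {F G : X ⟶ Y}
    (h1 : F.1 = G.1) (h2 : ∀ j, HEq (F.2 j) (G.2 j)) : F = G := by
  obtain ⟨f, φ⟩ := F; obtain ⟨g, ψ⟩ := G
  dsimp at h1; subst h1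
  congr 1
  funext j
  exact eq_of_heq (h2 j)

lemma FreeProd.hom_heq {D : Type u} [Category.{v} D] {X Y : FreeProd D} {F G : X ⟶ Y}
    (h : F = G) (j : Y.ι) : HEq (F.2 j) (G.2 j) := by subst h; rfl

lemma FreeCoprod.hom_ext' {D : Type u} [Category.{v} D] {X Y : FreeCoprod D} {F G : X ⟶ Y}
    (h1 : F.1 = G.1) (h2 : ∀ i, HEq (F.2 i) (G.2 i)) : F = G := by
  obtain ⟨f, φ⟩ := F; obtain ⟨g, ψ⟩ := G
  dsimp at h1; subst h1
  congr 1
  funext i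
  exact eq_of_heq (h2 i)

lemma FreeCoprod.hom_heq {D : Type u} [Category.{v} D] {X Y : FreeCoprod D} {F G : X ⟶ Y}
    (h : F = G) (i : X.ι) : HEq (F.2 i) (G.2 i) := by subst h; rfl

/-- The lift for the product fan. -/
def compLift (i : I) (s : Fan (fun a => compFactor I A u J B v i a)) :
    s.pt ⟶ compSummand I A u J B v i :=
  ⟨fun t => fun a => (s.proj a).1 t,
   fun t => ⟨fun p => ((s.proj p.1).2 t).1 p.2, fun p => ((s.proj p.1).2 t).2 p.2⟩⟩

/-- The descent for the coproduct cofan. -/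
def compDesc (s : Cofan (fun i => compSummand I A u J B v i)) :
    compTotal I A u J B v ⟶ s.pt :=
  ⟨fun p => (s.inj p.1).1 p.2, fun p => (s.inj p.1).2 p.2⟩

/-- in `ΣΠC`, the composition product
`(∑_i ∏_a u_{i,a}) ◁ (∑_j ∏_b v_{j,b}) := ∑_i ∏_{a∈A_i} (∑_j ∏_b (u_{i,a} · v_{j,b}))`
(where the middle `∏` is the categorical product in `ΣΠC`) is isomorphic to
`∑_i ∑_{j̄ : A_i → J} ∏_a ∏_b (u_{i,a} · v_{j̄ a,b})`: for each `i` the object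
`compSummand i` with the evident projections is the product `∏_{a∈A_i} ∑_j ∏_b (u_{i,a}·v_{j,b})`,
and `compTotal` with the evident inclusions is the coproduct `∑_i compSummand i`. -/
theorem comp_product_distributes :
    (∀ i : I, Nonempty (IsLimit (Fan.mk (compSummand I A u J B v i)
      (fun a => compProj I A u J B v i a)))) ∧
    Nonempty (IsColimit (Cofan.mk (compTotal I A u J B v)
      (fun i => compIncl I A u J B v i))) := by
  constructor
  · intro i
    refine ⟨mkFanLimit _ (fun s => compLift I A u J B v i s) ?_ ?_⟩
    · intro s a
      apply FreeCoprod.hom_ext'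
      · rfl
      · intro t
        apply heq_of_eq
        apply FreeProd.hom_ext'
        · rfl
        · intro b
          apply heq_of_eq
          simp [compLift, compProj, CategoryStruct.comp, FreeProd.category,
            FreeCoprod.category]
          exact Category.comp_id _
    · intro s m hm
      obtain ⟨m1, m2⟩ := m
      have h1 : m1 = fun t => fun a => (s.proj a).1 t := by
        funext t a
        exact congrFun (congrArg Sigma.fst (hm a)) t
      subst h1
      apply FreeCoprod.hom_ext'
      · rfl
      · intro t
        apply heq_of_eq
        -- m2 t = (compLift ...).2 t as FreeProd homs
        have key : ∀ a : A i, (⟨fun b => (m2 t).1 ⟨a, b⟩,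
            fun b => (m2 t).2 ⟨a, b⟩ ≫ 𝟙 _⟩ :
              (s.pt.obj t ⟶ (compFactor I A u J B v i a).obj ((s.proj a).1 t))) =
            (s.proj a).2 t := by
          intro a
          exact eq_of_heq (FreeCoprod.hom_heq (hm a) t)
        apply FreeProd.hom_ext'
        · funext p
          obtain ⟨a, b⟩ := p
          exact congrFun (congrArg Sigma.fst (key a)) b
        · rintro ⟨a, b⟩
          refine HEq.trans ?_ (FreeProd.hom_heq (key a) b)
          exact heq_of_eq (Category.comp_id _).symm
  · refine ⟨mkCofanColimit _ (fun s => compDesc I A u J B v s) ?_ ?_⟩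
    · intro s i
      apply FreeCoprod.hom_ext'
      · rfl
      · intro jbar
        apply heq_of_eq
        exact Category.id_comp _
    · intro s m hm
      obtain ⟨m1, m2⟩ := m
      apply FreeCoprod.hom_ext'
      · funext p
        obtain ⟨i, jbar⟩ := p
        exact congrFun (congrArg Sigma.fst (hm i)) jbar
      · rintro ⟨i, jbar⟩
        refine HEq.trans ?_ (FreeCoprod.hom_heq (hm i) jbar)
        exact heq_of_eq (Category.id_comp _).symm

end
end

section
/- For a generalized Lawvere metric space X and r ∈ [0,∞], there is a natural bijection between discrete dynamical systems φ: X → ∞ bounded above by r (i.e., |φ♯_x| ≤ r for every point x; equivalently φ factors through r → ∞) and (Σ[0,∞]_≥, 0, ⊕)-enriched cofunctors Φ: X ⇸ B_r, where B_r is the one-object enriched category with hom-set ℕ, addition as composition, and weight |n| = n·r. -/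
open CategoryTheory Limits Opposite MonoidalCategory ENNReal

universe v u

/-- The poset `[0, ∞]` of extended nonnegative reals, ordered by `≤` and viewed as a
category, is monoidal with unit `0` and tensor product `+`. -/
noncomputable instance : MonoidalCategory ℝ≥0∞ where
  tensorObj a b := a + b
  whiskerLeft a _ _ f := homOfLE (add_le_add_right (leOfHom f) a)
  whiskerRight f b := homOfLE (add_le_add_left (leOfHom f) b)
  tensorHom f g := homOfLE (add_le_add (leOfHom f) (leOfHom g))
  tensorUnit := 0
  associator a b c := eqToIso (add_assoc a b c)
  leftUnitor a := eqToIso (zero_add a)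
  rightUnitor a := eqToIso (add_zero a)
  tensorHom_def := by intros; exact Subsingleton.elim _ _
  id_tensorHom_id := by intros; exact Subsingleton.elim _ _
  tensorHom_comp_tensorHom := by intros; exact Subsingleton.elim _ _
  whiskerLeft_id := by intros; exact Subsingleton.elim _ _
  id_whiskerRight := by intros; exact Subsingleton.elim _ _
  associator_naturality := by intros; exact Subsingleton.elim _ _
  leftUnitor_naturality := by intros; exact Subsingleton.elim _ _
  rightUnitor_naturality := by intros; exact Subsingleton.elim _ _
  pentagon := by intros; exact Subsingleton.elim _ _
  triangle := by intros; exact Subsingleton.elim _ _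

/-- A small `(ΣCᵒᵖ, e, ⊙)`-enriched category, presented concretely: a set of objects,
morphisms with source and target, each morphism `f` carrying a weight `|f| ∈ C`; identity
morphisms with identity maps `η_x : |id_x| ⟶ e` in `C`; composition with composite maps
`μ_{f,g} : |gf| ⟶ |f| ⊗ |g|` in `C`; satisfying unitality and associativity coherence. -/
structure WCat (C : Type u) [Category.{v} C] [MonoidalCategory C] :
    Type (max u (v + 1)) where
  Obj : Type v
  Mor : Type v
  src : Mor → Obj
  tgt : Mor → Obj
  wt : Mor → C
  ide : Obj → Mor
  ide_src : ∀ x, src (ide x) = x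
  ide_tgt : ∀ x, tgt (ide x) = x
  cmp : ∀ (f g : Mor), tgt f = src g → Mor
  cmp_src : ∀ f g h, src (cmp f g h) = src f
  cmp_tgt : ∀ f g h, tgt (cmp f g h) = tgt g
  η : ∀ x, wt (ide x) ⟶ 𝟙_ C
  μ : ∀ f g h, wt (cmp f g h) ⟶ wt f ⊗ wt g
  ide_cmp : ∀ f : Mor, cmp (ide (src f)) f (ide_tgt _) = f
  cmp_ide : ∀ f : Mor, cmp f (ide (tgt f)) ((ide_src _).symm) = f
  cmp_assoc : ∀ (f g h : Mor) (hfg : tgt f = src g) (hgh : tgt g = src h),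
    cmp (cmp f g hfg) h (by rw [cmp_tgt]; exact hgh) =
      cmp f (cmp g h hgh) (by rw [cmp_src]; exact hfg)
  unit_left : ∀ f : Mor,
    μ (ide (src f)) f (ide_tgt _) ≫ (η (src f) ▷ wt f) ≫ (λ_ (wt f)).hom =
      eqToHom (congrArg wt (ide_cmp f))
  unit_right : ∀ f : Mor,
    μ f (ide (tgt f)) ((ide_src _).symm) ≫ (wt f ◁ η (tgt f)) ≫ (ρ_ (wt f)).hom =
      eqToHom (congrArg wt (cmp_ide f))
  mu_assoc : ∀ (f g h : Mor) (hfg : tgt f = src g) (hgh : tgt g = src h),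
    μ f (cmp g h hgh) (by rw [cmp_src]; exact hfg) ≫ (wt f ◁ μ g h hgh) =
      eqToHom (congrArg wt (cmp_assoc f g h hfg hgh)).symm ≫
        μ (cmp f g hfg) h (by rw [cmp_tgt]; exact hgh) ≫
        (μ f g hfg ▷ wt h) ≫ (α_ (wt f) (wt g) (wt h)).hom

/-- A `(ΣCᵒᵖ, e, ⊙)`-enriched cofunctor between small enriched categories, presented
concretely: an object function, lifts of morphisms out of images, and weight maps
`|Φ♯_a f| ⟶ |f|` in `C`, preserving identities and composites compatibly with `η` and `μ`. -/
structure WCof {C : Type u} [Category.{v} C] [MonoidalCategory C] (A B : WCat C) :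
    Type (max u v) where
  onObj : A.Obj → B.Obj
  lift : ∀ (a : A.Obj) (f : B.Mor), B.src f = onObj a → A.Mor
  lift_src : ∀ a f h, A.src (lift a f h) = a
  lift_tgt : ∀ a f h, onObj (A.tgt (lift a f h)) = B.tgt f
  onW : ∀ a f h, A.wt (lift a f h) ⟶ B.wt f
  lift_ide : ∀ a : A.Obj, lift a (B.ide (onObj a)) (B.ide_src _) = A.ide a
  ide_coh : ∀ a : A.Obj,
    onW a (B.ide (onObj a)) (B.ide_src _) ≫ B.η (onObj a) =
      eqToHom (congrArg A.wt (lift_ide a)) ≫ A.η a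
  lift_cmp : ∀ (a : A.Obj) (f g : B.Mor) (hf : B.src f = onObj a)
      (hfg : B.tgt f = B.src g),
    lift a (B.cmp f g hfg) (by rw [B.cmp_src]; exact hf) =
      A.cmp (lift a f hf) (lift (A.tgt (lift a f hf)) g (by rw [lift_tgt]; exact hfg.symm))
        ((lift_src _ _ _).symm)
  cmp_coh : ∀ (a : A.Obj) (f g : B.Mor) (hf : B.src f = onObj a)
      (hfg : B.tgt f = B.src g),
    onW a (B.cmp f g hfg) (by rw [B.cmp_src]; exact hf) ≫ B.μ f g hfg =
      eqToHom (congrArg A.wt (lift_cmp a f g hf hfg)) ≫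
        A.μ _ _ ((lift_src _ _ _).symm) ≫
        (onW a f hf ⊗ₘ onW (A.tgt (lift a f hf)) g (by rw [lift_tgt]; exact hfg.symm))


/-- The one-object `(Σ[0,∞]_≥, 0, ⊕)`-enriched category with hom-set `ℕ`, addition as
composition, and weight `|n| = n · r`. -/
noncomputable def natWeighted (r : ℝ≥0∞) : WCat ℝ≥0∞ where
  Obj := PUnit
  Mor := ℕ
  src _ := PUnit.unit
  tgt _ := PUnit.unit
  wt n := (n : ℝ≥0∞) * r
  ide _ := 0
  ide_src _ := rfl
  ide_tgt _ := rfl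
  cmp m n _ := m + n
  cmp_src _ _ _ := rfl
  cmp_tgt _ _ _ := rfl
  η _ := homOfLE (by simp)
  μ m n _ := homOfLE (le_of_eq (by show ((↑(m + n) : ℝ≥0∞)) * r = (↑m : ℝ≥0∞) * r + (↑n : ℝ≥0∞) * r; push_cast; ring))
  ide_cmp f := Nat.zero_add f
  cmp_ide f := Nat.add_zero f
  cmp_assoc f g h _ _ := Nat.add_assoc f g h
  unit_left _ := Subsingleton.elim _ _
  unit_right _ := Subsingleton.elim _ _
  mu_assoc _ _ _ _ _ := Subsingleton.elim _ _

/-- A generalized Lawvere metric space `X` (a small `(Σ[0,∞]_≥, 0, ⊕)`-enriched category,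
i.e. a comonoid in `(ΣΠ[0,∞]_≤, 0, ◁)`), viewed as its underlying polynomial in `[0,∞]_≤`:
positions are points, directions at `x` are the paths out of `x`, and predicates are costs. -/
noncomputable def polyOf (X : WCat ℝ≥0∞) : SigmaPi ℝ≥0∞ :=
  polyObj X.Obj (fun x => {m : X.Mor // X.src m = x}) (fun _ m => X.wt m.1)

/-- The one-position, one-direction polynomial with predicate `∞`. -/
noncomputable def inftyObj : SigmaPi ℝ≥0∞ :=
  polyObj PUnit (fun _ => PUnit) (fun _ _ => (∞ : ℝ≥0∞))

section Aux

variable (X : WCat ℝ≥0∞)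

lemma cmp_congr {f f' g g' : X.Mor} (hf : f = f') (hg : g = g')
    (h : X.tgt f = X.src g) :
    X.cmp f g h = X.cmp f' g' (by rw [← hf, ← hg]; exact h) := by
  subst hf; subst hg; rfl

variable (step : ∀ x : X.Obj, {m : X.Mor // X.src m = x})

/-- `n`-fold iterate of the step. -/
def iter : X.Obj → ℕ → X.Mor
  | a, 0 => X.ide a
  | a, n + 1 =>
    X.cmp (iter a n) (step (X.tgt (iter a n))).1 (step _).2.symm

lemma iter_src (a : X.Obj) : ∀ n, X.src (iter X step a n) = a
  | 0 => X.ide_src a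
  | n + 1 => by
    show X.src (X.cmp _ _ _) = a
    rw [X.cmp_src]; exact iter_src a n

lemma iter_wt {r : ℝ≥0∞} (hstep : ∀ x, X.wt (step x).1 ≤ r) (a : X.Obj) :
    ∀ n, X.wt (iter X step a n) ≤ (n : ℝ≥0∞) * r
  | 0 => by
    have h0 : X.wt (X.ide a) ≤ 0 := leOfHom (X.η a)
    show X.wt (X.ide a) ≤ _
    simpa using h0
  | n + 1 => by
    have h1 : X.wt (iter X step a (n + 1)) ≤
        X.wt (iter X step a n) + X.wt (step (X.tgt (iter X step a n))).1 :=
      leOfHom (X.μ _ _ (step _).2.symm)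
    refine h1.trans ?_
    have := add_le_add (iter_wt hstep a n) (hstep (X.tgt (iter X step a n)))
    refine this.trans (le_of_eq ?_)
    push_cast; ring

lemma iter_add (a : X.Obj) (m : ℕ) :
    ∀ n, iter X step a (m + n) =
      X.cmp (iter X step a m) (iter X step (X.tgt (iter X step a m)) n)
        ((iter_src X step _ n).symm)
  | 0 => by
    show iter X step a m = _
    exact (X.cmp_ide (iter X step a m)).symm
  | n + 1 => by
    show X.cmp (iter X step a (m + n)) _ _ = _
    refine (cmp_congr X (iter_add a m n)
      (congrArg (fun z => (step z).1)
        (congrArg X.tgt (iter_add a m n))) _).trans ?_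
    refine (X.cmp_assoc _ _ _ _ (((step _).2.trans (X.cmp_tgt _ _ _)).symm)).trans ?_
    refine cmp_congr X rfl ?_ _
    exact cmp_congr X rfl
      (congrArg (fun z => (step z).1) (X.cmp_tgt _ _ _)) _

lemma hom_ext (φ ψ : polyOf X ⟶ inftyObj)
    (h : ∀ x, ((φ.2 x).1 PUnit.unit).1 = ((ψ.2 x).1 PUnit.unit).1) : φ = ψ := by
  obtain ⟨f, g⟩ := φ
  obtain ⟨f', g'⟩ := ψ
  have hf : f = f' := funext fun _ => rfl
  subst hf
  simp only at h ⊢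
  congr 1
  funext x
  have h1 : (g x).1 = (g' x).1 := funext fun u => Subtype.ext (h x)
  refine Sigma.ext h1 ?_
  exact Subsingleton.helim (by rw [h1]) _ _

lemma wcof_ext {r : ℝ≥0∞} (F G : WCof X (natWeighted r))
    (h2 : ∀ a n h h', F.lift a n h = G.lift a n h') : F = G := by
  obtain ⟨o, l, ls, lt, ow, li, ic, lc, cc⟩ := F
  obtain ⟨o', l', ls', lt', ow', li', ic', lc', cc'⟩ := G
  have ho : o = o' := funext fun _ => rfl
  subst ho
  have hl : l = l' := funext fun a => funext fun n => funext fun h => h2 a n h h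
  subst hl
  congr 1
  funext a n h
  exact Subsingleton.elim _ _

end Aux

/-- for a generalized Lawvere metric space `X` and `r ∈ [0,∞]`, discrete
dynamical systems `φ : X → ∞` bounded above by `r` (i.e. every chosen step path has cost
at most `r`) are in natural bijection with `(Σ[0,∞]_≥, 0, ⊕)`-enriched cofunctors
`Φ : X ⇸ B_r`, where `B_r` is the one-object enriched category with hom-set `ℕ`,
addition as composition, and weight `|n| = n · r`. -/
theorem bounded_dds_equiv_enriched_cofunctors (X : WCat ℝ≥0∞) (r : ℝ≥0∞) :
    Nonempty ({φ : polyOf X ⟶ inftyObj // ∀ x : X.Obj, X.wt ((φ.2 x).1 PUnit.unit).1 ≤ r}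
      ≃ WCof X (natWeighted r)) := by
  refine ⟨{
    toFun := fun φ =>
      { onObj := fun _ => PUnit.unit
        lift := fun a n _ => iter X (fun x => (φ.1.2 x).1 PUnit.unit) a n
        lift_src := fun a n _ => iter_src X _ a n
        lift_tgt := fun _ _ _ => rfl
        onW := fun a n _ => homOfLE (iter_wt X _ φ.2 a n)
        lift_ide := fun a => rfl
        ide_coh := fun a => Subsingleton.elim _ _
        lift_cmp := fun a m n _ _ => iter_add X _ a m n
        cmp_coh := fun _ _ _ _ _ => Subsingleton.elim _ _ }
    invFun := fun Φ =>
      ⟨⟨fun _ => PUnit.unit, fun x =>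
        ⟨fun _ => ⟨Φ.lift x (1 : ℕ) rfl, Φ.lift_src x (1 : ℕ) rfl⟩, fun _ => homOfLE le_top⟩⟩,
        fun x => by
          have h1 := leOfHom (Φ.onW x (1 : ℕ) rfl)
          have h2 : (natWeighted r).wt (1 : ℕ) = r := by
            show ((1 : ℕ) : ℝ≥0∞) * r = r
            simp
          rw [h2] at h1
          exact h1⟩
    left_inv := fun φ => ?_
    right_inv := fun Φ => ?_ }⟩
  · refine Subtype.ext (hom_ext X _ _ fun x => ?_)
    show iter X (fun x => (φ.1.2 x).1 PUnit.unit) x 1 = _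
    set step := fun x => (φ.1.2 x).1 PUnit.unit with hstep
    show X.cmp (X.ide x) (step (X.tgt (X.ide x))).1 _ = (step x).1
    refine (cmp_congr X rfl (congrArg (fun z => (step z).1) (X.ide_tgt x)) _).trans ?_
    refine (cmp_congr X (congrArg X.ide (step x).2.symm) rfl _).trans ?_
    exact X.ide_cmp (step x).1
  · refine wcof_ext X _ _ fun a n h h' => ?_
    induction n generalizing a with
    | zero =>
      show X.ide a = _
      exact (Φ.lift_ide a).symm
    | succ n ih =>
      show X.cmp _ _ _ = _
      refine (cmp_congr X (ih a h h')
        (congrArg (fun z => Φ.lift z (1 : ℕ) rfl)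
          (congrArg X.tgt (ih a h h'))) _).trans ?_
      exact (Φ.lift_cmp a n (1 : ℕ) h' rfl).symm
end
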